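/- Finite-dimensional bounded-real lemma (Theorem 1), frequency-domain form: Let A ∈ ℝ^{n×n}, B ∈ ℝ^{n×m}, C ∈ ℝ^{q×n}, D ∈ ℝ^{q×m} and γ > 0. Suppose there exists a symmetric positive definite matrix P ∈ ℝ^{n×n} such that the symmetric block matrix [[AᵀP + PA, PB, Cᵀ], [BᵀP, −γI_m, Dᵀ], [C, D, −γI_q]] is negative semidefinite. Then for every ω ∈ ℝ such that the complex matrix iωI − A is invertible, the operator norm (with respect to Euclidean norms on ℂ^m and ℂ^q) of the transfer matrix C(iωI − A)⁻¹B + D is at most γ. -/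

import Mathlib

open Matrix MeasureTheory

noncomputable section

private lemma brl_star_sum_elim {k l : Type*} (x : k → ℂ) (y : l → ℂ) :
    star (Sum.elim x y) = Sum.elim (star x) (star y) := by
  funext i; cases i <;> rfl

private lemma brl_fromColumns_map {k l₁ l₂ : Type*} (A₁ : Matrix k l₁ ℝ) (A₂ : Matrix k l₂ ℝ) :
    (fromCols A₁ A₂).map Complex.ofReal
      = fromCols (A₁.map Complex.ofReal) (A₂.map Complex.ofReal) := by
  ext i (j|j) <;> rfl

private lemma brl_fromRows_map {k₁ k₂ l : Type*} (A₁ : Matrix k₁ l ℝ) (A₂ : Matrix k₂ l ℝ) :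
    (fromRows A₁ A₂).map Complex.ofReal
      = fromRows (A₁.map Complex.ofReal) (A₂.map Complex.ofReal) := by
  ext (i|i) j <;> rfl

private lemma brl_map_mul {k l r : Type*} [Fintype l] (M : Matrix k l ℝ) (N : Matrix l r ℝ) :
    (M * N).map Complex.ofReal = M.map Complex.ofReal * N.map Complex.ofReal := by
  ext i j; simp [Matrix.mul_apply, Matrix.map_apply]

private lemma brl_neg_smul_one_map_mulVec (γ : ℝ) {k : Type*} [Fintype k] [DecidableEq k]
    (w : k → ℂ) :
    ((-(γ • (1 : Matrix k k ℝ)))).map Complex.ofReal *ᵥ w = -((γ:ℂ) • w) := by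
  have h : ((-(γ • (1 : Matrix k k ℝ)))).map Complex.ofReal = -((γ:ℂ) • 1) := by
    ext i j; by_cases h : i = j <;> simp [Matrix.one_apply, h]
  rw [h]
  simp [Matrix.neg_mulVec, Matrix.smul_mulVec, Matrix.one_mulVec]

private lemma brl_re_quad_le {ι : Type*} [Fintype ι] (M : Matrix ι ι ℝ)
    (hM : ∀ ζ : ι → ℝ, ζ ⬝ᵥ M *ᵥ ζ ≤ 0) (z : ι → ℂ) :
    (star z ⬝ᵥ (M.map Complex.ofReal) *ᵥ z).re ≤ 0 := by
  have h : (star z ⬝ᵥ (M.map Complex.ofReal) *ᵥ z).re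
      = (fun i => (z i).re) ⬝ᵥ M *ᵥ (fun i => (z i).re)
        + (fun i => (z i).im) ⬝ᵥ M *ᵥ (fun i => (z i).im) := by
    simp only [dotProduct, mulVec, Matrix.map_apply, Pi.star_apply, Finset.mul_sum,
      Complex.re_sum, ← Finset.sum_add_distrib]
    refine Finset.sum_congr rfl fun i _ => Finset.sum_congr rfl fun j _ => ?_
    simp [Complex.mul_re, Complex.mul_im]
  rw [h]
  exact add_nonpos (hM _) (hM _)

private lemma brl_star_mulVec_real {k l : Type*} [Fintype l] (R : Matrix k l ℝ) (z : l → ℂ) :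
    (R.map Complex.ofReal) *ᵥ star z = star ((R.map Complex.ofReal) *ᵥ z) := by
  funext i
  simp [mulVec, dotProduct, map_sum]

private lemma brl_dot_self_eq {k : Type*} [Fintype k] (z : k → ℂ) :
    star z ⬝ᵥ z = ((∑ i, Complex.normSq (z i) : ℝ) : ℂ) := by
  simp [dotProduct, Complex.normSq_eq_conj_mul_self]

-- shift transpose dot: star w ⬝ᵥ (Rᵀ *ᵥ z) = star (R *ᵥ w) ⬝ᵥ z  (R real)
private lemma brl_transpose_dot {k l : Type*} [Fintype k] [Fintype l]
    (R : Matrix k l ℝ) (w : l → ℂ) (z : k → ℂ) :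
    star w ⬝ᵥ ((Rᵀ.map Complex.ofReal) *ᵥ z) = star ((R.map Complex.ofReal) *ᵥ w) ⬝ᵥ z := by
  rw [show (Rᵀ.map Complex.ofReal) = (R.map Complex.ofReal)ᵀ from Matrix.transpose_map,
    Matrix.dotProduct_mulVec, Matrix.vecMul_transpose, brl_star_mulVec_real]

theorem bounded_real_lemma_frequency_domain
    (n m q : ℕ)
    (A : Matrix (Fin n) (Fin n) ℝ) (B : Matrix (Fin n) (Fin m) ℝ)
    (C : Matrix (Fin q) (Fin n) ℝ) (D : Matrix (Fin q) (Fin m) ℝ)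
    (γ : ℝ) (hγ : 0 < γ)
    (P : Matrix (Fin n) (Fin n) ℝ) (hP : P.PosDef)
    (hLMI : ∀ ζ : Fin n ⊕ (Fin m ⊕ Fin q) → ℝ,
      ζ ⬝ᵥ ((Matrix.fromBlocks
          (Aᵀ * P + P * A)
          (Matrix.fromCols (P * B) Cᵀ)
          (Matrix.fromRows (Bᵀ * P) C)
          (Matrix.fromBlocks
            (-γ • (1 : Matrix (Fin m) (Fin m) ℝ)) Dᵀ
            D (-γ • (1 : Matrix (Fin q) (Fin q) ℝ)))) *ᵥ ζ) ≤ 0)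
    (ω : ℝ)
    (hinv : IsUnit
      (((ω : ℂ) * Complex.I) • (1 : Matrix (Fin n) (Fin n) ℂ) - A.map Complex.ofReal)) :
    ‖LinearMap.toContinuousLinearMap (Matrix.toEuclideanLin
        (C.map Complex.ofReal *
            (((ω : ℂ) * Complex.I) • (1 : Matrix (Fin n) (Fin n) ℂ) - A.map Complex.ofReal)⁻¹ *
            B.map Complex.ofReal
          + D.map Complex.ofReal))‖ ≤ γ := by
  set s : ℂ := (ω : ℂ) * Complex.I with hsdef
  set Ac := A.map Complex.ofReal
  set Bc := B.map Complex.ofReal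
  set Cc := C.map Complex.ofReal
  set Dc := D.map Complex.ofReal
  set Pc := P.map Complex.ofReal with hPc
  set S : Matrix (Fin n) (Fin n) ℂ := s • (1 : Matrix (Fin n) (Fin n) ℂ) - Ac with hS
  have hdet : IsUnit S.det := (Matrix.isUnit_iff_isUnit_det _).mp hinv
  -- it suffices to bound the norm pointwise
  refine ContinuousLinearMap.opNorm_le_bound _ hγ.le fun u0 => ?_
  set u : Fin m → ℂ := (WithLp.equiv 2 (Fin m → ℂ)) u0 with hu
  set x : Fin n → ℂ := S⁻¹ *ᵥ (Bc *ᵥ u) with hx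
  have hSx : S *ᵥ x = Bc *ᵥ u := by
    rw [hx, Matrix.mulVec_mulVec, Matrix.mul_nonsing_inv _ hdet, Matrix.one_mulVec]
  have hBu : Bc *ᵥ u = s • x - Ac *ᵥ x := by
    rw [← hSx, hS, Matrix.sub_mulVec, Matrix.smul_mulVec, Matrix.one_mulVec]
  set y : Fin q → ℂ := Cc *ᵥ x + Dc *ᵥ u with hy
  set v : Fin q → ℂ := (γ⁻¹ : ℂ) • y with hv
  have hs_star : (starRingEnd ℂ) s = -s := by
    simp [hsdef, Complex.conj_I, mul_comm]
  -- the value of the operator is y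
  have happ : LinearMap.toContinuousLinearMap (Matrix.toEuclideanLin
        (Cc * S⁻¹ * Bc + Dc)) u0 = (WithLp.equiv 2 (Fin q → ℂ)).symm y := by
    show Matrix.toEuclideanLin (Cc * S⁻¹ * Bc + Dc) u0 = _
    rw [Matrix.toEuclideanLin_apply]
    congr 1
    rw [Matrix.add_mulVec, hy, show u0.ofLp = u from rfl]
    congr 1
    rw [Matrix.mul_assoc, ← Matrix.mulVec_mulVec, ← Matrix.mulVec_mulVec, hx]
  -- plug ζ into the complexified LMI
  have hkey := brl_re_quad_le _ hLMI (Sum.elim x (Sum.elim u v))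
  -- expand the quadratic form
  have hexp : star (Sum.elim x (Sum.elim u v)) ⬝ᵥ
      ((Matrix.fromBlocks
          (Aᵀ * P + P * A)
          (Matrix.fromCols (P * B) Cᵀ)
          (Matrix.fromRows (Bᵀ * P) C)
          (Matrix.fromBlocks
            (-γ • (1 : Matrix (Fin m) (Fin m) ℝ)) Dᵀ
            D (-γ • (1 : Matrix (Fin q) (Fin q) ℝ)))).map Complex.ofReal *ᵥ
        (Sum.elim x (Sum.elim u v)))
    = (star x ⬝ᵥ ((Aᵀ*P+P*A).map Complex.ofReal *ᵥ x))
      + ((star x ⬝ᵥ ((P*B).map Complex.ofReal *ᵥ u)) + (star x ⬝ᵥ ((Cᵀ).map Complex.ofReal *ᵥ v)))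
      + ((star u ⬝ᵥ ((Bᵀ*P).map Complex.ofReal *ᵥ x)) + (star v ⬝ᵥ (Cc *ᵥ x)))
      + (-((γ:ℂ) * (star u ⬝ᵥ u)) + star u ⬝ᵥ ((Dᵀ).map Complex.ofReal *ᵥ v)
         + star v ⬝ᵥ (Dc *ᵥ u) + -((γ:ℂ) * (star v ⬝ᵥ v))) := by
    simp only [Matrix.fromBlocks_map, brl_fromColumns_map, brl_fromRows_map,
      Matrix.fromBlocks_mulVec, Matrix.fromCols_mulVec_sumElim, Matrix.fromRows_mulVec,
      brl_star_sum_elim, sumElim_dotProduct_sumElim, dotProduct_add,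
      Sum.elim_comp_inl, Sum.elim_comp_inr, neg_smul, brl_neg_smul_one_map_mulVec,
      dotProduct_neg, dotProduct_smul, smul_eq_mul]
    ring
  -- the `A,B,P` part vanishes
  have hE1 : (star x ⬝ᵥ ((Aᵀ*P+P*A).map Complex.ofReal *ᵥ x))
      + (star x ⬝ᵥ ((P*B).map Complex.ofReal *ᵥ u))
      + (star u ⬝ᵥ ((Bᵀ*P).map Complex.ofReal *ᵥ x)) = 0 := by
    have h1 : (Aᵀ*P+P*A).map Complex.ofReal = Acᵀ * Pc + Pc * Ac := by
      rw [Matrix.map_add _ (by push_cast; simp), brl_map_mul, brl_map_mul, Matrix.transpose_map]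
    have h2 : (P*B).map Complex.ofReal = Pc * Bc := brl_map_mul _ _
    have h3 : (Bᵀ*P).map Complex.ofReal = Bcᵀ * Pc := by
      rw [brl_map_mul, Matrix.transpose_map]
    rw [h1, h2, h3]
    simp only [Matrix.add_mulVec, dotProduct_add, ← Matrix.mulVec_mulVec]
    have hterm2 : star x ⬝ᵥ (Pc *ᵥ (Bc *ᵥ u))
        = s * (star x ⬝ᵥ (Pc *ᵥ x)) - star x ⬝ᵥ (Pc *ᵥ (Ac *ᵥ x)) := by
      rw [hBu, Matrix.mulVec_sub, Matrix.mulVec_smul, dotProduct_sub,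
        dotProduct_smul, smul_eq_mul]
    have hterm3 : star u ⬝ᵥ (Bcᵀ *ᵥ (Pc *ᵥ x))
        = -(s * (star x ⬝ᵥ (Pc *ᵥ x))) - star x ⬝ᵥ (Acᵀ *ᵥ (Pc *ᵥ x)) := by
      rw [show Bcᵀ = (Bᵀ).map Complex.ofReal from Matrix.transpose_map.symm,
        brl_transpose_dot, hBu]
      rw [star_sub, sub_dotProduct, star_smul, smul_dotProduct,
        ← brl_star_mulVec_real]
      rw [show ((Ac *ᵥ star x) ⬝ᵥ (Pc *ᵥ x)) = star x ⬝ᵥ (Acᵀ *ᵥ (Pc *ᵥ x)) by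
        rw [← Matrix.vecMul_transpose, ← Matrix.dotProduct_mulVec]]
      simp [hs_star, smul_eq_mul]
    rw [hterm2, hterm3]
    ring
  -- remaining cross terms
  have hE2 : star x ⬝ᵥ ((Cᵀ).map Complex.ofReal *ᵥ v) + star u ⬝ᵥ ((Dᵀ).map Complex.ofReal *ᵥ v)
      = (γ⁻¹ : ℂ) * (star y ⬝ᵥ y) := by
    rw [brl_transpose_dot, brl_transpose_dot, ← add_dotProduct, ← star_add, ← hy, hv]
    rw [dotProduct_smul, smul_eq_mul]
    try push_cast
    try ring
  have hE3 : star v ⬝ᵥ (Cc *ᵥ x) + star v ⬝ᵥ (Dc *ᵥ u) = (γ⁻¹ : ℂ) * (star y ⬝ᵥ y) := by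
    rw [← dotProduct_add, ← hy, hv, star_smul, smul_dotProduct]
    simp [Complex.conj_ofReal, smul_eq_mul]
    try push_cast
    try ring
  have hvv : star v ⬝ᵥ v = (γ⁻¹ : ℂ) * ((γ⁻¹ : ℂ) * (star y ⬝ᵥ y)) := by
    rw [hv, star_smul, smul_dotProduct, dotProduct_smul]
    simp [Complex.conj_ofReal, smul_eq_mul]
    try push_cast
    try ring
  set Yr : ℝ := ∑ i, Complex.normSq (y i) with hYr
  set Ur : ℝ := ∑ i, Complex.normSq (u i) with hUr
  have hYc : star y ⬝ᵥ y = (Yr : ℂ) := brl_dot_self_eq y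
  have hUc : star u ⬝ᵥ u = (Ur : ℂ) := brl_dot_self_eq u
  have hγc : (γ : ℂ) ≠ 0 := by exact_mod_cast hγ.ne'
  -- total quadratic form value
  have htot : star (Sum.elim x (Sum.elim u v)) ⬝ᵥ
      ((Matrix.fromBlocks
          (Aᵀ * P + P * A)
          (Matrix.fromCols (P * B) Cᵀ)
          (Matrix.fromRows (Bᵀ * P) C)
          (Matrix.fromBlocks
            (-γ • (1 : Matrix (Fin m) (Fin m) ℝ)) Dᵀ
            D (-γ • (1 : Matrix (Fin q) (Fin q) ℝ)))).map Complex.ofReal *ᵥ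
        (Sum.elim x (Sum.elim u v)))
      = ((γ⁻¹ * Yr - γ * Ur : ℝ) : ℂ) := by
    rw [hexp]
    have h0 := hE1
    have : star x ⬝ᵥ ((Aᵀ*P+P*A).map Complex.ofReal *ᵥ x)
        + ((star x ⬝ᵥ ((P*B).map Complex.ofReal *ᵥ u)) + (star x ⬝ᵥ ((Cᵀ).map Complex.ofReal *ᵥ v)))
        + ((star u ⬝ᵥ ((Bᵀ*P).map Complex.ofReal *ᵥ x)) + (star v ⬝ᵥ (Cc *ᵥ x)))
        + (-((γ:ℂ) * (star u ⬝ᵥ u)) + star u ⬝ᵥ ((Dᵀ).map Complex.ofReal *ᵥ v)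
           + star v ⬝ᵥ (Dc *ᵥ u) + -((γ:ℂ) * (star v ⬝ᵥ v)))
        = (star x ⬝ᵥ ((Aᵀ*P+P*A).map Complex.ofReal *ᵥ x)
            + (star x ⬝ᵥ ((P*B).map Complex.ofReal *ᵥ u))
            + (star u ⬝ᵥ ((Bᵀ*P).map Complex.ofReal *ᵥ x)))
          + (star x ⬝ᵥ ((Cᵀ).map Complex.ofReal *ᵥ v) + star u ⬝ᵥ ((Dᵀ).map Complex.ofReal *ᵥ v))
          + (star v ⬝ᵥ (Cc *ᵥ x) + star v ⬝ᵥ (Dc *ᵥ u))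
          + (-((γ:ℂ) * (star u ⬝ᵥ u)) + -((γ:ℂ) * (star v ⬝ᵥ v))) := by ring
    rw [this, hE1, hE2, hE3, hvv, hYc, hUc]
    push_cast
    field_simp
    ring
  rw [htot] at hkey
  simp only [Complex.ofReal_re] at hkey
  -- deduce the norm-squared inequality
  have hUr0 : 0 ≤ Ur := Finset.sum_nonneg fun i _ => Complex.normSq_nonneg _
  have hYr0 : 0 ≤ Yr := Finset.sum_nonneg fun i _ => Complex.normSq_nonneg _
  have hYU : Yr ≤ γ ^ 2 * Ur := by
    have h1 : γ⁻¹ * Yr ≤ γ * Ur := by linarith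
    have h2 := mul_le_mul_of_nonneg_left h1 hγ.le
    rw [← mul_assoc, mul_inv_cancel₀ hγ.ne', one_mul] at h2
    nlinarith
  -- translate to norms
  rw [happ]
  have hnormy : ‖(WithLp.equiv 2 (Fin q → ℂ)).symm y‖ = Real.sqrt Yr := by
    rw [EuclideanSpace.norm_eq]
    congr 1
    refine Finset.sum_congr rfl fun i _ => ?_
    rw [show (WithLp.equiv 2 (Fin q → ℂ)).symm y i = y i from rfl,
      Complex.sq_norm]
  have hnormu : ‖u0‖ = Real.sqrt Ur := by
    rw [EuclideanSpace.norm_eq]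
    congr 1
    refine Finset.sum_congr rfl fun i _ => ?_
    rw [show u0 i = u i from rfl, Complex.sq_norm]
  rw [hnormy, hnormu, show γ * Real.sqrt Ur = Real.sqrt (γ ^ 2 * Ur) by
    rw [Real.sqrt_mul (sq_nonneg γ), Real.sqrt_sq hγ.le]]
  exact Real.sqrt_le_sqrt hYU
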